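/- arXiv:1402.1665 — 4 statements merged into one kernel-verified Lean document; each statement's English description precedes it below -/
import Mathlib

section
/- Let H be a real Hilbert space, let V and U be mutually orthogonal closed subspaces of H, let W = V ⊕ U (so that π_W = π_V + π_U for the orthogonal projections), and let L be a bounded self-adjoint operator on H. Then ‖L − π_V L π_V − π_U L π_U − (1−π_W) L (1−π_W)‖ ≤ ‖L π_W − π_W L‖ + ‖L π_V − π_V L‖, where ‖·‖ denotes the operator norm. -/
open scoped InnerProductSpace

/-- The orthogonal projection of a Hilbert space onto (the closure of) a subspace, viewed as a
continuous linear operator `H →L[ℝ] H`. For a closed subspace this is the usual orthogonal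
projection onto it. -/
noncomputable def orthProj {H : Type*} [NormedAddCommGroup H] [InnerProductSpace ℝ H]
    [CompleteSpace H] (V : Submodule ℝ H) : H →L[ℝ] H :=
  V.topologicalClosure.subtypeL.comp V.topologicalClosure.orthogonalProjectionOnto

section Aux

variable {H : Type*} [NormedAddCommGroup H] [InnerProductSpace ℝ H] [CompleteSpace H]

lemma orthProj_apply (V : Submodule ℝ H) (x : H) :
    orthProj V x = (V.topologicalClosure.orthogonalProjectionOnto x : H) := rfl

lemma orthProj_mem (V : Submodule ℝ H) (hV : IsClosed (V : Set H)) (x : H) :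
    orthProj V x ∈ V := by
  rw [orthProj_apply]
  exact V.topologicalClosure_minimal le_rfl hV (Submodule.coe_mem _)

lemma orthProj_eq_self (V : Submodule ℝ H) {x : H} (hx : x ∈ V) : orthProj V x = x := by
  rw [orthProj_apply]
  exact Submodule.starProjection_eq_self_iff.mpr (V.le_topologicalClosure hx)

lemma orthProj_eq_zero (V : Submodule ℝ H) (hV : IsClosed (V : Set H)) {x : H}
    (hx : x ∈ Vᗮ) : orthProj V x = 0 := by
  rw [orthProj_apply]
  have hx' : x ∈ V.topologicalClosureᗮ :=
    Submodule.orthogonal_le (V.topologicalClosure_minimal le_rfl hV) hx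
  rw [Submodule.orthogonalProjectionOnto_apply_of_mem_orthogonal hx']
  simp

lemma orthProj_sub_mem (V : Submodule ℝ H) (hV : IsClosed (V : Set H)) (x : H) :
    x - orthProj V x ∈ Vᗮ := by
  rw [orthProj_apply]
  exact Submodule.orthogonal_le (V.le_topologicalClosure)
    (Submodule.sub_starProjection_mem_orthogonal (K := V.topologicalClosure) x)

lemma orthProj_norm_le (V : Submodule ℝ H) (x : H) : ‖orthProj V x‖ ≤ ‖x‖ := by
  rw [orthProj_apply]
  have h1 := (V.topologicalClosure.orthogonalProjectionOnto).le_opNorm x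
  have h2 := Submodule.orthogonalProjectionOnto_norm_le V.topologicalClosure
  have : ‖V.topologicalClosure.orthogonalProjectionOnto x‖ ≤ 1 * ‖x‖ :=
    h1.trans (mul_le_mul_of_nonneg_right h2 (norm_nonneg x))
  simpa using this

end Aux

/-- For mutually orthogonal closed subspaces `V, U` of a real Hilbert space,
`W = V ⊕ U`, and a bounded self-adjoint operator `L`,
`‖L − π_V L π_V − π_U L π_U − (1−π_W) L (1−π_W)‖ ≤ ‖L π_W − π_W L‖ + ‖L π_V − π_V L‖`. -/
theorem compression_block_estimate
    {H : Type*} [NormedAddCommGroup H] [InnerProductSpace ℝ H] [CompleteSpace H]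
    (V U W : Submodule ℝ H)
    (hV_closed : IsClosed (V : Set H)) (hU_closed : IsClosed (U : Set H))
    (hW_closed : IsClosed (W : Set H))
    (horth : ∀ v ∈ V, ∀ u ∈ U, ⟪v, u⟫_ℝ = 0)
    (hW : W = V ⊔ U)
    (L : H →L[ℝ] H) (hL_sa : IsSelfAdjoint L) :
    ‖L - orthProj V * L * orthProj V - orthProj U * L * orthProj U
        - (1 - orthProj W) * L * (1 - orthProj W)‖
      ≤ ‖L * orthProj W - orthProj W * L‖ + ‖L * orthProj V - orthProj V * L‖ := by
  have hUV : U ≤ Vᗮ := fun u hu => (Submodule.mem_orthogonal _ _).mpr fun v hv => horth v hv u hu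
  have hVU : V ≤ Uᗮ := fun v hv => (Submodule.mem_orthogonal _ _).mpr fun u hu => by
    rw [real_inner_comm]; exact horth v hv u hu
  have hVW : V ≤ W := hW ▸ le_sup_left
  have hUW : U ≤ W := hW ▸ le_sup_right
  -- pointwise `π_W = π_V + π_U`
  have hRx : ∀ x : H, orthProj W x = orthProj V x + orthProj U x := by
    intro x
    have hmem : orthProj V x + orthProj U x ∈ W.topologicalClosure :=
      W.le_topologicalClosure
        (W.add_mem (hVW (orthProj_mem V hV_closed x)) (hUW (orthProj_mem U hU_closed x)))
    have horthc : x - (orthProj V x + orthProj U x) ∈ W.topologicalClosureᗮ := by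
      rw [hW_closed.submodule_topologicalClosure_eq]
      refine (Submodule.mem_orthogonal _ _).mpr fun w hw => ?_
      rw [hW] at hw
      obtain ⟨v, hv, u, hu, rfl⟩ := Submodule.mem_sup.mp hw
      have e1 : ⟪v, x - (orthProj V x + orthProj U x)⟫_ℝ = 0 := by
        rw [show x - (orthProj V x + orthProj U x) = (x - orthProj V x) - orthProj U x by abel,
          inner_sub_right]
        rw [Submodule.inner_right_of_mem_orthogonal hv (orthProj_sub_mem V hV_closed x),
          horth v hv _ (orthProj_mem U hU_closed x)]
        ring
      have e2 : ⟪u, x - (orthProj V x + orthProj U x)⟫_ℝ = 0 := by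
        rw [show x - (orthProj V x + orthProj U x) = (x - orthProj U x) - orthProj V x by abel,
          inner_sub_right]
        rw [Submodule.inner_right_of_mem_orthogonal hu (orthProj_sub_mem U hU_closed x),
          real_inner_comm, horth _ (orthProj_mem V hV_closed x) u hu]
        ring
      rw [inner_add_left, e1, e2, add_zero]
    exact Submodule.eq_starProjection_of_mem_orthogonal hmem horthc
  have hR_op : orthProj W = orthProj V + orthProj U := by
    ext x; exact hRx x
  have hPQ : ∀ x : H, orthProj V (orthProj U x) = 0 := fun x =>
    orthProj_eq_zero V hV_closed (hUV (orthProj_mem U hU_closed x))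
  have hQP : ∀ x : H, orthProj U (orthProj V x) = 0 := fun x =>
    orthProj_eq_zero U hU_closed (hVU (orthProj_mem V hV_closed x))
  -- the algebraic identity
  have key : L - orthProj V * L * orthProj V - orthProj U * L * orthProj U
        - (1 - orthProj W) * L * (1 - orthProj W)
      = orthProj U * L * orthProj V + orthProj V * L * orthProj U
        + (1 - orthProj W) * L * orthProj W + orthProj W * L * (1 - orthProj W) := by
    rw [hR_op]; noncomm_ring
  rw [key]
  set C := L * orthProj W - orthProj W * L with hC
  set D := L * orthProj V - orthProj V * L with hD
  refine ContinuousLinearMap.opNorm_le_bound _ (by positivity) fun x => ?_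
  rw [ContinuousLinearMap.add_apply, ContinuousLinearMap.add_apply,
    ContinuousLinearMap.add_apply, add_assoc]
  have h1 : ‖(orthProj U * L * orthProj V) x + (orthProj V * L * orthProj U) x‖
      ≤ ‖D‖ * ‖x‖ := by
    simp only [ContinuousLinearMap.mul_apply]
    set p := orthProj V x with hp
    set q := orthProj U x with hq
    have ha1 : orthProj U (L p) ∈ U := orthProj_mem U hU_closed _
    have hb1 : orthProj V (L q) ∈ V := orthProj_mem V hV_closed _
    have hinner : ⟪orthProj U (L p), orthProj V (L q)⟫_ℝ = 0 := by
      rw [real_inner_comm]; exact horth _ hb1 _ ha1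
    have hsq : ‖orthProj U (L p) + orthProj V (L q)‖ ^ 2
        = ‖orthProj U (L p)‖ ^ 2 + ‖orthProj V (L q)‖ ^ 2 := by
      rw [norm_add_sq_real, hinner]; ring
    have hQa : ‖orthProj U (L p)‖ ≤ ‖D‖ * ‖p‖ := by
      have he : orthProj U (L p) = orthProj U (D p) := by
        have hPp : orthProj V p = p := orthProj_eq_self V (orthProj_mem V hV_closed x)
        simp [hD, ContinuousLinearMap.sub_apply, ContinuousLinearMap.mul_apply, hPp,
          map_sub, hQP]
      rw [he]
      exact (orthProj_norm_le U _).trans (D.le_opNorm p)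
    have hPb : ‖orthProj V (L q)‖ ≤ ‖D‖ * ‖q‖ := by
      have he : orthProj V (L q) = -(D q) := by
        simp [hD, ContinuousLinearMap.sub_apply, ContinuousLinearMap.mul_apply, hq, hPQ x]
      rw [he, norm_neg]
      exact D.le_opNorm q
    have hpq : ‖p‖ ^ 2 + ‖q‖ ^ 2 ≤ ‖x‖ ^ 2 := by
      have hpq0 : ⟪p, q⟫_ℝ = 0 :=
        horth p (orthProj_mem V hV_closed x) q (orthProj_mem U hU_closed x)
      have h3 : ‖p + q‖ ^ 2 = ‖p‖ ^ 2 + ‖q‖ ^ 2 := by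
        rw [norm_add_sq_real, hpq0]; ring
      have h4 : ‖p + q‖ ≤ ‖x‖ := by
        rw [← hRx x]; exact orthProj_norm_le W x
      nlinarith [norm_nonneg (p + q), norm_nonneg x]
    have hsq2 : ‖orthProj U (L p) + orthProj V (L q)‖ ^ 2 ≤ (‖D‖ * ‖x‖) ^ 2 := by
      have ha2 := pow_le_pow_left₀ (norm_nonneg _) hQa 2
      have hb2' := pow_le_pow_left₀ (norm_nonneg _) hPb 2
      nlinarith [sq_nonneg ‖D‖]
    exact le_of_pow_le_pow_left₀ two_ne_zero (by positivity) hsq2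
  have h2 : ‖((1 - orthProj W) * L * orthProj W) x + (orthProj W * L * (1 - orthProj W)) x‖
      ≤ ‖C‖ * ‖x‖ := by
    simp only [ContinuousLinearMap.mul_apply, ContinuousLinearMap.sub_apply,
      ContinuousLinearMap.one_apply]
    set r := orthProj W x with hr
    -- a2 = L r - π_W (L r), b2 = π_W (L (x - r))
    have ha2 : L r - orthProj W (L r) ∈ Wᗮ := orthProj_sub_mem W hW_closed (L r)
    have hb2 : orthProj W (L (x - r)) ∈ W := orthProj_mem W hW_closed _
    have hinner : ⟪L r - orthProj W (L r), orthProj W (L (x - r))⟫_ℝ = 0 :=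
      Submodule.inner_left_of_mem_orthogonal hb2 ha2
    have hsq : ‖(L r - orthProj W (L r)) + orthProj W (L (x - r))‖ ^ 2
        = ‖L r - orthProj W (L r)‖ ^ 2 + ‖orthProj W (L (x - r))‖ ^ 2 := by
      rw [norm_add_sq_real, hinner]; ring
    have hCa : ‖L r - orthProj W (L r)‖ ≤ ‖C‖ * ‖r‖ := by
      have he : L r - orthProj W (L r) = C r := by
        have hRr : orthProj W r = r := orthProj_eq_self W (orthProj_mem W hW_closed x)
        simp [hC, ContinuousLinearMap.sub_apply, ContinuousLinearMap.mul_apply, hRr]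
      rw [he]; exact C.le_opNorm r
    have hCb : ‖orthProj W (L (x - r))‖ ≤ ‖C‖ * ‖x - r‖ := by
      have he : orthProj W (L (x - r)) = -(C (x - r)) := by
        have hRr : orthProj W (x - r) = 0 := by
          rw [map_sub, hr, orthProj_eq_self W (orthProj_mem W hW_closed x), sub_self]
        simp [hC, ContinuousLinearMap.sub_apply, ContinuousLinearMap.mul_apply, hRr]
      rw [he, norm_neg]; exact C.le_opNorm (x - r)
    have hpq : ‖r‖ ^ 2 + ‖x - r‖ ^ 2 = ‖x‖ ^ 2 := by
      have hr0 : ⟪r, x - r⟫_ℝ = 0 :=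
        Submodule.inner_right_of_mem_orthogonal (orthProj_mem W hW_closed x)
          (orthProj_sub_mem W hW_closed x)
      have hx' : x = r + (x - r) := by abel
      calc ‖r‖ ^ 2 + ‖x - r‖ ^ 2 = ‖r + (x - r)‖ ^ 2 := by
            rw [norm_add_sq_real, hr0]; ring
        _ = ‖x‖ ^ 2 := by rw [← hx']
    have hsq2 : ‖(L r - orthProj W (L r)) + orthProj W (L (x - r))‖ ^ 2 ≤ (‖C‖ * ‖x‖) ^ 2 := by
      have ha2 := pow_le_pow_left₀ (norm_nonneg _) hCa 2
      have hb2' := pow_le_pow_left₀ (norm_nonneg _) hCb 2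
      nlinarith [sq_nonneg ‖C‖]
    exact le_of_pow_le_pow_left₀ two_ne_zero (by positivity) hsq2
  calc ‖((orthProj U * L * orthProj V) x + (orthProj V * L * orthProj U) x)
        + (((1 - orthProj W) * L * orthProj W) x + (orthProj W * L * (1 - orthProj W)) x)‖
      ≤ ‖(orthProj U * L * orthProj V) x + (orthProj V * L * orthProj U) x‖
        + ‖((1 - orthProj W) * L * orthProj W) x + (orthProj W * L * (1 - orthProj W)) x‖ :=
        norm_add_le _ _
    _ ≤ ‖D‖ * ‖x‖ + ‖C‖ * ‖x‖ := add_le_add h1 h2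
    _ = (‖C‖ + ‖D‖) * ‖x‖ := by ring
end

section
/- Let H be a real Hilbert space, L a bounded self-adjoint operator on H, δ > 0, and V a closed subspace of H that is invariant under L (L(V) ⊆ V) and on which L is δ-positive: ⟨Lv, v⟩ ≥ δ‖v‖² for all v ∈ V. Then for every x ∈ V and every t ≥ 0, ‖exp(tL) x‖ ≥ e^{tδ}·‖x‖, where exp(tL) denotes the operator exponential. -/
open scoped InnerProductSpace RealInnerProductSpace

/-- If `L` is a bounded self-adjoint operator on a real Hilbert space, `V` is
a closed `L`-invariant subspace on which `L` is `δ`-positive (`⟨Lv, v⟩ ≥ δ‖v‖²`), then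
`‖exp(tL) x‖ ≥ e^{tδ}‖x‖` for every `x ∈ V` and `t ≥ 0`. -/
theorem exp_norm_lower_bound_on_positive_subspace
    {H : Type*} [NormedAddCommGroup H] [InnerProductSpace ℝ H] [CompleteSpace H]
    (L : H →L[ℝ] H) (hL_sa : IsSelfAdjoint L)
    (δ : ℝ) (hδ : 0 < δ)
    (V : Submodule ℝ H) (hV_closed : IsClosed (V : Set H))
    (hV_inv : ∀ v ∈ V, L v ∈ V)
    (hV_pos : ∀ v ∈ V, δ * ‖v‖ ^ 2 ≤ ⟪L v, v⟫) :
    ∀ x ∈ V, ∀ t : ℝ, 0 ≤ t →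
      Real.exp (t * δ) * ‖x‖ ≤ ‖NormedSpace.exp (t • L) x‖ := by
  intro x hx t ht
  set u : ℝ → H := fun s => NormedSpace.exp (s • L) x with hu_def
  -- membership of the orbit in V
  have hpow : ∀ (s : ℝ) (n : ℕ), ((s • L) ^ n) x ∈ V := by
    intro s n
    induction n with
    | zero => simpa using hx
    | succ n ih =>
      rw [pow_succ']
      have : (s • L) (((s • L) ^ n) x) ∈ V := by
        simp only [ContinuousLinearMap.smul_apply]
        exact V.smul_mem s (hV_inv _ ih)
      simpa using this
  have hmem : ∀ s : ℝ, u s ∈ V := by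
    intro s
    have hsum : HasSum (fun n : ℕ => ((n.factorial : ℝ))⁻¹ • (s • L) ^ n)
        (NormedSpace.exp (s • L)) := by
      rw [NormedSpace.exp_eq_tsum (𝕂 := ℝ)]
      exact (NormedSpace.expSeries_summable' (𝕂 := ℝ) (s • L)).hasSum
    have hsum' : HasSum (fun n : ℕ => (((n.factorial : ℝ))⁻¹ • (s • L) ^ n) x) (u s) :=
      hsum.mapL (ContinuousLinearMap.apply ℝ H x)
    refine hV_closed.mem_of_tendsto hsum' (Filter.Eventually.of_forall ?_)
    intro F
    refine V.sum_mem fun n _ => ?_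
    simp only [ContinuousLinearMap.smul_apply]
    exact V.smul_mem _ (hpow s n)
  -- derivative of the orbit
  have hderiv : ∀ s : ℝ, HasDerivAt u (L (u s)) s := by
    intro s
    have h1 : HasDerivAt (fun r : ℝ => NormedSpace.exp (r • L))
        (L * NormedSpace.exp (s • L)) s := hasDerivAt_exp_smul_const' L s
    have h2 := h1.clm_apply (hasDerivAt_const s x)
    simpa using h2
  -- the squared-norm function
  set f : ℝ → ℝ := fun s => ⟪u s, u s⟫ with hf_def
  have hfderiv : ∀ s : ℝ, HasDerivAt f (2 * ⟪L (u s), u s⟫) s := by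
    intro s
    have := (hderiv s).inner ℝ (hderiv s)
    have heq : ⟪u s, L (u s)⟫ + ⟪L (u s), u s⟫ = 2 * ⟪L (u s), u s⟫ := by
      rw [real_inner_comm (u s)]; ring
    rw [heq] at this
    exact this
  set g : ℝ → ℝ := fun s => Real.exp (-(2 * δ) * s) * f s with hg_def
  have hgderiv : ∀ s : ℝ,
      HasDerivAt g (Real.exp (-(2 * δ) * s) * (2 * ⟪L (u s), u s⟫ - 2 * δ * f s)) s := by
    intro s
    have he : HasDerivAt (fun r : ℝ => Real.exp (-(2 * δ) * r))
        (-(2 * δ) * Real.exp (-(2 * δ) * s)) s := by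
      have h0 := ((hasDerivAt_id s).const_mul (-(2 * δ))).exp
      simp only [id_eq] at h0
      convert h0 using 1
      ring
    have : HasDerivAt g (-(2 * δ) * Real.exp (-(2 * δ) * s) * f s + Real.exp (-(2 * δ) * s) * (2 * ⟪L (u s), u s⟫)) s := he.mul (hfderiv s)
    convert this using 1
    ring
  have hgmono : Monotone g := by
    refine monotone_of_deriv_nonneg (fun s => (hgderiv s).differentiableAt) ?_
    intro s
    rw [(hgderiv s).deriv]
    have hfs : f s = ‖u s‖ ^ 2 := real_inner_self_eq_norm_sq (u s)
    have hpos := hV_pos (u s) (hmem s)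
    have : 2 * δ * f s ≤ 2 * ⟪L (u s), u s⟫ := by rw [hfs]; nlinarith
    have h2 : (0:ℝ) < Real.exp (-(2 * δ) * s) := Real.exp_pos _
    nlinarith
  have hg0 : g 0 = ‖x‖ ^ 2 := by
    simp [hg_def, hf_def, hu_def, real_inner_self_eq_norm_sq]
  have hgt := hgmono ht
  rw [hg0] at hgt
  -- conclude
  have hft : f t = ‖u t‖ ^ 2 := real_inner_self_eq_norm_sq (u t)
  have hexp : Real.exp (-(2 * δ) * t) = (Real.exp (t * δ))⁻¹ ^ 2 := by
    rw [← Real.exp_neg, ← Real.exp_nat_mul]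
    ring_nf
  have hkey : (Real.exp (t * δ) * ‖x‖) ^ 2 ≤ ‖u t‖ ^ 2 := by
    have he : (0:ℝ) < Real.exp (t * δ) := Real.exp_pos _
    rw [hg_def] at hgt
    simp only at hgt
    rw [hft, hexp] at hgt
    calc (Real.exp (t * δ) * ‖x‖) ^ 2
        = Real.exp (t * δ) ^ 2 * ‖x‖ ^ 2 := by ring
      _ ≤ Real.exp (t * δ) ^ 2 * ((Real.exp (t * δ))⁻¹ ^ 2 * ‖u t‖ ^ 2) := by
          have := mul_le_mul_of_nonneg_left hgt (le_of_lt (pow_pos he 2))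
          linarith
      _ = ‖u t‖ ^ 2 := by
          field_simp
  have h1 : (0:ℝ) ≤ Real.exp (t * δ) * ‖x‖ := by positivity
  nlinarith [hkey, h1, norm_nonneg (u t)]
end

section
/- Let U be a finite-dimensional real inner product space and A : U → U a symmetric (self-adjoint) linear map with trivial kernel. If y : ℝ → U is differentiable with y'(t) = −A(y(t)) for all t ∈ ℝ and the range of y is bounded, then y(t) = 0 for all t ∈ ℝ. In other words, the only full trajectory of the nondegenerate linear flow generated by A that stays in a bounded set for all time is the constant trajectory at the origin. -/
open scoped InnerProductSpace RealInnerProductSpace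

/-- Let `U` be a finite-dimensional real inner product space and `A : U → U`
a symmetric linear map with trivial kernel. The only bounded full trajectory of the
nondegenerate linear flow `y' = −A y` is the constant trajectory at the origin. -/
theorem bounded_trajectory_of_nondegenerate_linear_flow_eq_zero
    {U : Type*} [NormedAddCommGroup U] [InnerProductSpace ℝ U] [FiniteDimensional ℝ U]
    (A : U →ₗ[ℝ] U)
    (hA_sym : ∀ u v : U, ⟪A u, v⟫ = ⟪u, A v⟫)
    (hA_ker : LinearMap.ker A = ⊥)
    (y : ℝ → U)
    (hy : ∀ t : ℝ, HasDerivAt y (-(A (y t))) t)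
    (hbdd : Bornology.IsBounded (Set.range y)) :
    ∀ t : ℝ, y t = 0 := by
  classical
  have hsym : A.IsSymmetric := hA_sym
  obtain ⟨M, hM⟩ := isBounded_iff_forall_norm_le.1 hbdd
  have hM' : ∀ t, ‖y t‖ ≤ M := fun t => hM _ ⟨t, rfl⟩
  have hM0 : (0 : ℝ) ≤ M := le_trans (norm_nonneg _) (hM' 0)
  have hrank : Module.finrank ℝ U = Module.finrank ℝ U := rfl
  set b := hsym.eigenvectorBasis hrank with hb
  set μ := hsym.eigenvalues hrank with hμ
  have key : ∀ i t, ⟪b i, y t⟫ = 0 := by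
    intro i
    have hev := hsym.hasEigenvector_eigenvectorBasis hrank i
    have happ : A (b i) = μ i • b i := hev.apply_eq_smul
    have hμne : μ i ≠ 0 := by
      intro h
      have hker : b i ∈ LinearMap.ker A := by
        simp [LinearMap.mem_ker, happ, h]
      rw [hA_ker, Submodule.mem_bot] at hker
      exact hev.right hker
    set c : ℝ → ℝ := fun t => ⟪b i, y t⟫ with hc
    have hc' : ∀ t, HasDerivAt c (-(μ i) * c t) t := by
      intro t
      have h1 := (hasDerivAt_const t (b i)).inner ℝ (hy t)
      have h2 : ⟪b i, -(A (y t))⟫ + ⟪(0 : U), y t⟫ = -(μ i) * c t := by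
        have : ⟪b i, A (y t)⟫ = μ i * c t := by
          rw [← hsym (b i) (y t), happ, real_inner_smul_left]
        simp [inner_neg_right, this]
      rw [h2] at h1
      exact h1
    -- g t = c t * exp (μ i * t) is constant
    set g : ℝ → ℝ := fun t => c t * Real.exp (μ i * t) with hg
    have hg' : ∀ t, HasDerivAt g 0 t := by
      intro t
      have he : HasDerivAt (fun t => Real.exp (μ i * t)) (Real.exp (μ i * t) * μ i) t := by
        simpa using ((hasDerivAt_id t).const_mul (μ i)).exp
      have := (hc' t).mul he
      have h0 : -(μ i) * c t * Real.exp (μ i * t) + c t * (Real.exp (μ i * t) * μ i) = 0 := by ring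
      rw [h0] at this
      exact this
    have hgconst : ∀ t, g t = g 0 := by
      intro t
      have hdiff : Differentiable ℝ g := fun x => (hg' x).differentiableAt
      exact is_const_of_deriv_eq_zero hdiff (fun x => (hg' x).deriv) t 0
    have hformula : ∀ t, c t = c 0 * Real.exp (-(μ i * t)) := by
      intro t
      have h := hgconst t
      simp only [hg] at h
      have : c 0 = c t * Real.exp (μ i * t) := by simpa using h.symm
      rw [this, Real.exp_neg]
      field_simp
    have hcbdd : ∀ t, |c t| ≤ M := by
      intro t
      calc |c t| ≤ ‖b i‖ * ‖y t‖ := abs_real_inner_le_norm _ _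
        _ = ‖y t‖ := by rw [b.orthonormal.1 i, one_mul]
        _ ≤ M := hM' t
    have hc0 : c 0 = 0 := by
      by_contra h0
      have habs : 0 < |c 0| := abs_pos.2 h0
      set t := -(Real.log (M / |c 0| + 1)) / μ i with ht
      have hμt : -(μ i * t) = Real.log (M / |c 0| + 1) := by
        have h7 : μ i * t = -Real.log (M / |c 0| + 1) := by
          rw [ht]; field_simp
        linarith
      have hlog : Real.exp (-(μ i * t)) = M / |c 0| + 1 := by
        rw [hμt, Real.exp_log]
        positivity
      have := hcbdd t
      rw [hformula t, hlog, abs_mul] at this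
      have hx : |M / |c 0| + 1| = M / |c 0| + 1 := abs_of_pos (by positivity)
      rw [hx] at this
      have : |c 0| * (M / |c 0|) + |c 0| ≤ M := by linarith [this, mul_add |c 0| (M / |c 0|) 1]
      rw [mul_div_cancel₀ M (ne_of_gt habs)] at this
      linarith
    intro t
    show c t = 0
    rw [hformula t, hc0, zero_mul]
  intro t
  have := b.sum_repr' (y t)
  rw [← this]
  simp [key _ t]
end

section
/- For i = 1, 2, let η_i be a flow on a locally compact Hausdorff topological space Ω_i, let S_i be a compact invariant set, and let (N_i, L_i) be an index pair for S_i: N_i and L_i are compact, (1) S_i ⊆ N_i \ L_i and S_i = Inv(closure(N_i \ L_i), η_i), (2) L_i is positively invariant relative to N_i (if x ∈ L_i and η_i(x,[0,t]) ⊆ N_i, then η_i(x,[0,t]) ⊆ L_i), and (3) L_i is an exit set for N_i (if x ∈ N_i and η_i(x,[0,∞)) ⊄ N_i, then there is t > 0 with η_i(x,[0,t]) ⊆ N_i and η_i(x,t) ∈ L_i). Then (N₁ × N₂, N₁ × L₂ ∪ L₁ × N₂) is an index pair for S₁ × S₂ with respect to the product flow η₁ × η₂ on Ω₁ × Ω₂: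 the two sets are compact and conditions (1), (2), (3) hold for S₁ × S₂. -/
/-- The maximal invariant subset of `X` with respect to a flow `η`. -/
def flowInv {Ω : Type*} (η : Ω → ℝ → Ω) (X : Set Ω) : Set Ω :=
  {x ∈ X | ∀ t : ℝ, η x t ∈ X}

/-- `(N, L)` is an index pair for a compact invariant set `S` with respect to the flow `η`:
`N` and `L` are compact, `S ⊆ N \ L` with `S = Inv(closure(N \ L), η)`, `L` is positively
invariant relative to `N`, and `L` is an exit set for `N`. -/
def IsIndexPair {Ω : Type*} [TopologicalSpace Ω] (η : Ω → ℝ → Ω) (S N L : Set Ω) : Prop :=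
  IsCompact N ∧ IsCompact L ∧
  (S ⊆ N \ L ∧ S = flowInv η (closure (N \ L))) ∧
  (∀ x ∈ L, ∀ t : ℝ, 0 ≤ t →
    (∀ s ∈ Set.Icc (0:ℝ) t, η x s ∈ N) → ∀ s ∈ Set.Icc (0:ℝ) t, η x s ∈ L) ∧
  (∀ x ∈ N, ¬ (∀ s : ℝ, 0 ≤ s → η x s ∈ N) →
    ∃ t > (0:ℝ), (∀ s ∈ Set.Icc (0:ℝ) t, η x s ∈ N) ∧ η x t ∈ L)

/-- If `(N᾿i, L᾿i)` is an index pair for the compact invariant set `S᾿i` of a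
flow `η᾿i` on a locally compact Hausdorff space `Ω᾿i` (i = 1, 2), then
`(N₁ × N₂, N₁ × L₂ ∪ L₁ × N₂)` is an index pair for `S₁ × S₂` with respect to the product
flow on `Ω₁ × Ω₂`. -/
theorem isIndexPair_prod
    {Ω₁ Ω₂ : Type*} [TopologicalSpace Ω₁] [TopologicalSpace Ω₂]
    [LocallyCompactSpace Ω₁] [T2Space Ω₁] [LocallyCompactSpace Ω₂] [T2Space Ω₂]
    (η₁ : Ω₁ → ℝ → Ω₁) (η₂ : Ω₂ → ℝ → Ω₂)
    (hη₁_cont : Continuous (fun p : Ω₁ × ℝ => η₁ p.1 p.2))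
    (hη₁_zero : ∀ x, η₁ x 0 = x)
    (hη₁_group : ∀ (x : Ω₁) (s t : ℝ), η₁ (η₁ x s) t = η₁ x (s + t))
    (hη₂_cont : Continuous (fun p : Ω₂ × ℝ => η₂ p.1 p.2))
    (hη₂_zero : ∀ x, η₂ x 0 = x)
    (hη₂_group : ∀ (x : Ω₂) (s t : ℝ), η₂ (η₂ x s) t = η₂ x (s + t))
    (S₁ N₁ L₁ : Set Ω₁) (S₂ N₂ L₂ : Set Ω₂)
    (hS₁_cpt : IsCompact S₁) (hS₁_inv : ∀ x ∈ S₁, ∀ t : ℝ, η₁ x t ∈ S₁)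
    (hS₂_cpt : IsCompact S₂) (hS₂_inv : ∀ x ∈ S₂, ∀ t : ℝ, η₂ x t ∈ S₂)
    (h₁ : IsIndexPair η₁ S₁ N₁ L₁) (h₂ : IsIndexPair η₂ S₂ N₂ L₂) :
    IsIndexPair (fun p : Ω₁ × Ω₂ => fun t => (η₁ p.1 t, η₂ p.2 t))
      (S₁ ×ˢ S₂) (N₁ ×ˢ N₂) (N₁ ×ˢ L₂ ∪ L₁ ×ˢ N₂) := by
  obtain ⟨hN₁c, hL₁c, ⟨hS₁sub, hS₁eq⟩, hL₁pos, hL₁exit⟩ := h₁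
  obtain ⟨hN₂c, hL₂c, ⟨hS₂sub, hS₂eq⟩, hL₂pos, hL₂exit⟩ := h₂
  have hdiff : (N₁ ×ˢ N₂) \ (N₁ ×ˢ L₂ ∪ L₁ ×ˢ N₂) = (N₁ \ L₁) ×ˢ (N₂ \ L₂) := by
    ext ⟨x, y⟩
    simp only [Set.mem_diff, Set.mem_prod, Set.mem_union]
    tauto
  refine ⟨hN₁c.prod hN₂c, (hN₁c.prod hL₂c).union (hL₁c.prod hN₂c), ⟨?_, ?_⟩, ?_, ?_⟩
  · rintro ⟨x, y⟩ ⟨hx, hy⟩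
    have hx' := hS₁sub hx
    have hy' := hS₂sub hy
    rw [hdiff]
    exact ⟨hx', hy'⟩
  · rw [hdiff, closure_prod_eq]
    ext ⟨x, y⟩
    simp only [Set.mem_prod, flowInv, Set.mem_setOf_eq]
    constructor
    · rintro ⟨hx, hy⟩
      rw [hS₁eq] at hx
      rw [hS₂eq] at hy
      exact ⟨⟨hx.1, hy.1⟩, fun t => ⟨hx.2 t, hy.2 t⟩⟩
    · rintro ⟨⟨hx, hy⟩, h⟩
      constructor
      · rw [hS₁eq]; exact ⟨hx, fun t => (h t).1⟩
      · rw [hS₂eq]; exact ⟨hy, fun t => (h t).2⟩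
  · rintro ⟨x, y⟩ hxy t ht hN s hs
    rcases hxy with ⟨hx, hy⟩ | ⟨hx, hy⟩
    · exact Or.inl ⟨(hN s hs).1, hL₂pos y hy t ht (fun s hs => (hN s hs).2) s hs⟩
    · exact Or.inr ⟨hL₁pos x hx t ht (fun s hs => (hN s hs).1) s hs, (hN s hs).2⟩
  · rintro ⟨x, y⟩ ⟨hx, hy⟩ hne
    by_cases hxall : ∀ s : ℝ, 0 ≤ s → η₁ x s ∈ N₁
    · by_cases hyall : ∀ s : ℝ, 0 ≤ s → η₂ y s ∈ N₂
      · exact absurd (fun s hs => ⟨hxall s hs, hyall s hs⟩) hne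
      · obtain ⟨t, ht, hN, hL⟩ := hL₂exit y hy hyall
        exact ⟨t, ht, fun s hs => ⟨hxall s hs.1, hN s hs⟩,
          Or.inl ⟨hxall t ht.le, hL⟩⟩
    · obtain ⟨t₁, ht₁, hN1, hL1⟩ := hL₁exit x hx hxall
      by_cases hyall : ∀ s : ℝ, 0 ≤ s → η₂ y s ∈ N₂
      · exact ⟨t₁, ht₁, fun s hs => ⟨hN1 s hs, hyall s hs.1⟩,
          Or.inr ⟨hL1, hyall t₁ ht₁.le⟩⟩
      · obtain ⟨t₂, ht₂, hN2, hL2⟩ := hL₂exit y hy hyall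
        rcases le_total t₁ t₂ with hle | hle
        · exact ⟨t₁, ht₁, fun s hs => ⟨hN1 s hs, hN2 s ⟨hs.1, hs.2.trans hle⟩⟩,
            Or.inr ⟨hL1, hN2 t₁ ⟨ht₁.le, hle⟩⟩⟩
        · exact ⟨t₂, ht₂, fun s hs => ⟨hN1 s ⟨hs.1, hs.2.trans hle⟩, hN2 s hs⟩,
            Or.inl ⟨hN1 t₂ ⟨ht₂.le, hle⟩, hL2⟩⟩
end
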